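/- Let R be a finite commutative ring with unity, let χ be an additive character of R, let x ∈ R, and let K be the largest ideal of R contained in (x) ∩ {y ∈ R : χ(y) = 1}, where (x) is the ideal generated by x. Then φ_R(K,(x)) · C_χ(x) = μ_R(K,(x)) · |[x]|; equivalently, C_χ(x) = μ_R(K,(x)) · |[x]| / φ_R(K,(x)). -/

import Mathlib

open scoped BigOperators
open Classical

variable {R : Type*}

/-- The left ideal of `R` generated by `x`, i.e. `(x)_ℓ`. -/
def lgen [Ring R] (x : R) : Submodule R R := Submodule.span R {x}

/-- `[x]_ℓ = {y : (y)_ℓ = (x)_ℓ}`. -/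
def classL [Ring R] (x : R) : Set R := {y | lgen y = lgen x}

/-- The character sum `C_χ(x) = ∑_{s ∈ [x]_ℓ} χ(s)`. -/
noncomputable def CchiL [Ring R] (χ : AddChar R ℂ) (x : R) : ℂ :=
  ∑ᶠ s ∈ classL x, χ s

/-- The set `M_R(J)` of maximal `R`-left ideals of `J`. -/
def maxROf [Ring R] (J : Submodule R R) : Set (Submodule R R) :=
  {M | M < J ∧ ∀ I' : Submodule R R, M < I' → ¬ I' < J}

/-- The set `M_R(J, K)` of maximal `R`-left ideals of `J` containing `K`. -/
def maxROfAbove [Ring R] (J K : Submodule R R) : Set (Submodule R R) :=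
  {M | M ∈ maxROf J ∧ K ≤ M}

/-- Intersection of the family `E` of left ideals, with the convention that the
empty intersection is `J`. -/
noncomputable def interIn [Ring R] (J : Submodule R R) (E : Set (Submodule R R)) :
    Submodule R R :=
  if E = ∅ then J else sInf E

/-- The Möbius function `μ_R(I, J)` on left ideals of `R`. -/
noncomputable def muR [Ring R] (I J : Submodule R R) : ℤ :=
  if I = J then 1
  else if I < J ∧ ∃ E : Set (Submodule R R),
      E ⊆ maxROf J ∧ E.Nonempty ∧ interIn J E = I then
    (Nat.card {E : Set (Submodule R R) //
        E ⊆ maxROf J ∧ interIn J E = I ∧ Even (Nat.card E)} : ℤ)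
      - (Nat.card {E : Set (Submodule R R) //
        E ⊆ maxROf J ∧ interIn J E = I ∧ Odd (Nat.card E)} : ℤ)
  else 0

/-- The function `φ_R(I, J)` on left ideals of `R`. -/
noncomputable def phiR [Ring R] (I J : Submodule R R) : ℂ :=
  if I = J then 1
  else if I < J ∧ ∃ E : Set (Submodule R R),
      E ⊆ maxROf J ∧ E.Nonempty ∧ interIn J E = I then
    ∏ᶠ M ∈ maxROfAbove J I, ((Nat.card J : ℂ) / (Nat.card M : ℂ) - 1)
  else 1


section Work
variable [CommRing R]

lemma mem_lgen {x s : R} : s ∈ lgen x ↔ ∃ r, s = r * x := by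
  rw [lgen, Ideal.submodule_span_eq, Ideal.mem_span_singleton']
  exact ⟨fun ⟨a, h⟩ => ⟨a, h.symm⟩, fun ⟨a, h⟩ => ⟨a, h.symm⟩⟩

lemma x_mem_lgen (x : R) : x ∈ lgen x := Submodule.mem_span_singleton_self x

lemma mem_colon_iff {x : R} {M : Submodule R R} {r : R} :
    r ∈ M.colon (lgen x) ↔ r * x ∈ M := by
  rw [Submodule.mem_colon]
  constructor
  · intro h; exact h x (x_mem_lgen x)
  · intro h p hp
    obtain ⟨w, rfl⟩ := mem_lgen.1 hp
    have h2 : r * (w * x) = w * (r * x) := by ring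
    rw [smul_eq_mul, h2]
    exact M.smul_mem w h

lemma lgen_le {x : R} {M : Submodule R R} (h : x ∈ M) : lgen x ≤ M := by
  rw [lgen, Submodule.span_le, Set.singleton_subset_iff]; exact h

lemma cover_colon {x : R} {M : Submodule R R} (hM : M ∈ maxROf (lgen x)) :
    (M.colon (lgen x)).IsMaximal ∧ (M.colon (lgen x)) * (lgen x) = M := by
  set J := lgen x with hJ
  set m := M.colon J with hm
  have hkey : ∀ r : R, r ∉ m → ∃ s : R, 1 - s * r ∈ m := by
    intro r hr
    have hrx : r * x ∉ M := fun h => hr (mem_colon_iff.2 h)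
    have hlt : M < M ⊔ lgen (r * x) := by
      refine lt_of_le_of_ne le_sup_left (fun h => hrx ?_)
      have : r * x ∈ M ⊔ lgen (r * x) :=
        (le_sup_right : lgen (r * x) ≤ _) (x_mem_lgen (r * x))
      rwa [← h] at this
    have hle : M ⊔ lgen (r * x) ≤ J := by
      refine sup_le hM.1.le (lgen_le ?_)
      exact (lgen x).smul_mem r (x_mem_lgen x)
    have heq : M ⊔ lgen (r * x) = J :=
      le_antisymm hle (by
        by_contra h
        exact hM.2 _ hlt (lt_of_le_of_ne hle (fun he => h (he ▸ le_rfl))))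
    have hx : x ∈ M ⊔ lgen (r * x) := heq ▸ x_mem_lgen x
    obtain ⟨a, haM, b, hb, hab⟩ := Submodule.mem_sup.1 hx
    obtain ⟨c, rfl⟩ := mem_lgen.1 hb
    refine ⟨c, mem_colon_iff.2 ?_⟩
    have : (1 - c * r) * x = a := by
      rw [sub_mul, one_mul]
      have : c * (r * x) = c * r * x := by ring
      rw [this] at hab
      linear_combination -hab
    rw [this]; exact haM
  constructor
  · rw [Ideal.isMaximal_iff]
    constructor
    · intro h1
      have : J ≤ M := by
        intro j hj
        have := (Submodule.mem_colon.1 h1) j hj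
        simpa using this
      exact absurd (lt_of_lt_of_le hM.1 this) (lt_irrefl M)
    · intro I r hmI hrm hrI
      obtain ⟨s, hs⟩ := hkey r hrm
      have : (1 : R) = (1 - s * r) + s * r := by ring
      rw [this]
      exact I.add_mem (hmI hs) (I.mul_mem_left s hrI)
  · apply le_antisymm
    · rw [Ideal.mul_le]
      intro r hr j hj
      have := (Submodule.mem_colon.1 hr) j hj
      simpa using this
    · intro a haM
      have haJ : a ∈ J := hM.1.le haM
      obtain ⟨w, rfl⟩ := mem_lgen.1 haJ
      exact Ideal.mul_mem_mul (mem_colon_iff.2 haM) (x_mem_lgen x)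

end Work

section Work2
variable [CommRing R] [Fintype R]

instance submodFinite : Finite (Submodule R R) :=
  Finite.of_injective (fun S : Submodule R R => (S : Set R)) SetLike.coe_injective

/-- the finset of covers of `lgen x` -/
noncomputable def Pfin (x : R) : Finset (Submodule R R) :=
  (Set.toFinite (maxROf (lgen x))).toFinset

lemma mem_Pfin {x : R} {M : Submodule R R} : M ∈ Pfin x ↔ M ∈ maxROf (lgen x) := by
  rw [Pfin, Set.Finite.mem_toFinset]

/-- `I_t` -/
noncomputable def It (x : R) (t : Finset (Submodule R R)) : Submodule R R :=
  lgen x ⊓ t.inf id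

lemma It_le_J {x : R} (t : Finset (Submodule R R)) : It x t ≤ lgen x := inf_le_left

lemma It_le_mem {x : R} {t : Finset (Submodule R R)} {M : Submodule R R} (h : M ∈ t) :
    It x t ≤ M :=
  le_trans inf_le_right (Finset.inf_le h)

lemma It_empty (x : R) : It x ∅ = lgen x := by simp [It]

lemma It_insert {x : R} {t : Finset (Submodule R R)} {M : Submodule R R} :
    It x (insert M t) = It x t ⊓ M := by
  simp only [It, Finset.inf_insert, id]
  rw [inf_comm (M : Submodule R R) (t.inf id), ← inf_assoc]

lemma comax {x : R} {t : Finset (Submodule R R)} (ht : ∀ M ∈ t, M ∈ maxROf (lgen x))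
    {M : Submodule R R} (hM : M ∈ maxROf (lgen x)) (hMt : M ∉ t) :
    It x t ⊔ M = lgen x := by
  set J := lgen x with hJ
  have hcop : IsCoprime (∏ M' ∈ t, M'.colon J) (M.colon J) := by
    apply IsCoprime.prod_left
    intro M' hM'
    exact Ideal.isCoprime_iff_sup_eq.2 <| Ideal.IsMaximal.coprime_of_ne (cover_colon (ht M' hM')).1 (cover_colon hM).1
      (fun he => hMt (by
        have : M' = M := by
          rw [← (cover_colon (ht M' hM')).2, ← (cover_colon hM).2, he]
        rwa [this] at hM'))
  obtain ⟨u, hu, v, hv, huv⟩ := Ideal.isCoprime_iff_exists.1 hcop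
  apply le_antisymm (sup_le (It_le_J t) hM.1.le)
  intro j hj
  have h1 : u * j ∈ It x t := by
    refine Submodule.mem_inf.2 ⟨Submodule.smul_mem _ u hj, ?_⟩
    rw [Submodule.mem_finsetInf]
    intro M' hM'
    have huM' : u ∈ M'.colon J := (Ideal.prod_le_inf.trans (Finset.inf_le hM')) hu
    simpa using (Submodule.mem_colon.1 huM') j hj
  have h2 : v * j ∈ M := by simpa using (Submodule.mem_colon.1 hv) j hj
  have : j = u * j + v * j := by rw [← add_mul, huv, one_mul]
  rw [this]
  exact Submodule.add_mem _ ((le_sup_left : It x t ≤ _) h1) ((le_sup_right : M ≤ _) h2)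

lemma card_inf_mul_card_sup (A B : Submodule R R) :
    Nat.card ↥(A ⊓ B) * Nat.card ↥(A ⊔ B) = Nat.card ↥A * Nat.card ↥B := by
  have e := LinearMap.quotientInfEquivSupQuotient A B
  have h1 := Submodule.card_eq_card_quotient_mul_card (Submodule.comap A.subtype (A ⊓ B))
  have h2 := Submodule.card_eq_card_quotient_mul_card (Submodule.comap (A ⊔ B).subtype B)
  have e1 : Nat.card ↥(Submodule.comap A.subtype (A ⊓ B)) = Nat.card ↥(A ⊓ B) :=
    Nat.card_congr (Submodule.comapSubtypeEquivOfLe (inf_le_left : A ⊓ B ≤ A)).toEquiv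
  have e2 : Nat.card ↥(Submodule.comap (A ⊔ B).subtype B) = Nat.card ↥B :=
    Nat.card_congr (Submodule.comapSubtypeEquivOfLe (le_sup_right : B ≤ A ⊔ B)).toEquiv
  have e3 : Nat.card (↥A ⧸ Submodule.comap A.subtype (A ⊓ B)) =
      Nat.card (↥(A ⊔ B) ⧸ Submodule.comap (A ⊔ B).subtype B) := Nat.card_congr e.toEquiv
  rw [e1, e3] at h1
  rw [e2] at h2
  rw [h1, h2]
  ring

lemma card_It {x : R} {t : Finset (Submodule R R)} (ht : ∀ M ∈ t, M ∈ maxROf (lgen x)) :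
    Nat.card ↥(It x t) * ∏ M ∈ t, Nat.card ↥(lgen x)
      = Nat.card ↥(lgen x) * ∏ M ∈ t, Nat.card ↥M := by
  classical
  induction t using Finset.induction_on with
  | empty => simp [It_empty]
  | insert _ _ hMt =>
      rename_i M t ih
      have hM : M ∈ maxROf (lgen x) := ht M (Finset.mem_insert_self M t)
      have ht' : ∀ M' ∈ t, M' ∈ maxROf (lgen x) := fun M' h => ht M' (Finset.mem_insert_of_mem h)
      have hsup : It x t ⊔ M = lgen x := comax ht' hM hMt
      have hcard := card_inf_mul_card_sup (It x t) M
      rw [hsup, ← It_insert] at hcard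
      rw [Finset.prod_insert hMt, Finset.prod_insert hMt]
      calc Nat.card ↥(It x (insert M t)) * (Nat.card ↥(lgen x) * ∏ M ∈ t, Nat.card ↥(lgen x))
          = (Nat.card ↥(It x (insert M t)) * Nat.card ↥(lgen x)) * ∏ M ∈ t, Nat.card ↥(lgen x) := by ring
        _ = (Nat.card ↥(It x t) * Nat.card ↥M) * ∏ M ∈ t, Nat.card ↥(lgen x) := by rw [hcard]
        _ = Nat.card ↥M * (Nat.card ↥(It x t) * ∏ M ∈ t, Nat.card ↥(lgen x)) := by ring
        _ = Nat.card ↥M * (Nat.card ↥(lgen x) * ∏ M ∈ t, Nat.card ↥M) := by rw [ih ht']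
        _ = Nat.card ↥(lgen x) * (Nat.card ↥M * ∏ M ∈ t, Nat.card ↥M) := by ring

end Work2

section Work3
variable [Fintype R]

noncomputable def sfin (S : Set R) : Finset R := (Set.toFinite S).toFinset

lemma mem_sfin {S : Set R} {s : R} : s ∈ sfin S ↔ s ∈ S := Set.Finite.mem_toFinset _

lemma card_sfin (S : Set R) : (sfin S).card = Nat.card ↥S := by
  rw [Nat.card_coe_set_eq, Set.ncard_eq_toFinset_card S (Set.toFinite S)]
  rfl

variable [CommRing R]

lemma char_eq_zero_iff {χ : AddChar R ℂ} {I : Submodule R R} :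
    χ.compAddMonoidHom I.subtype.toAddMonoidHom = 0 ↔ ∀ s ∈ I, χ s = 1 := by
  rw [AddChar.eq_zero_iff]
  constructor
  · intro h s hs; exact h ⟨s, hs⟩
  · intro h a; exact h a a.2

lemma char_sum_submodule (χ : AddChar R ℂ) (I : Submodule R R) :
    ∑ s ∈ sfin (I : Set R), χ s
      = if ∀ s ∈ I, χ s = 1 then (Nat.card ↥I : ℂ) else 0 := by
  classical
  have h1 : ∑ s ∈ sfin (I : Set R), χ s = ∑ a : ↥I, χ ↑a := by
    apply Finset.sum_subtype
    intro s; rw [mem_sfin]; rfl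
  have h2 : ∀ a : ↥I, χ ↑a = (χ.compAddMonoidHom I.subtype.toAddMonoidHom) a := fun a => rfl
  rw [h1]
  simp_rw [h2]
  rw [AddChar.sum_eq_ite]
  rw [Nat.card_eq_fintype_card]
  split_ifs with hc hd hd
  · rfl
  · exact absurd (char_eq_zero_iff.1 hc) hd
  · exact absurd (char_eq_zero_iff.2 hd) hc
  · rfl

lemma classL_eq (x : R) :
    classL x = {s | s ∈ lgen x ∧ ∀ M ∈ maxROf (lgen x), s ∉ M} := by
  ext s
  simp only [classL, Set.mem_setOf_eq]
  constructor
  · intro h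
    have hs : s ∈ lgen x := h ▸ x_mem_lgen s
    refine ⟨hs, fun M hM hsM => ?_⟩
    have : lgen s ≤ M := lgen_le hsM
    rw [h] at this
    exact absurd (lt_of_le_of_lt this hM.1) (lt_irrefl _)
  · rintro ⟨hs, hmax⟩
    by_contra hne
    have hlt : lgen s < lgen x := lt_of_le_of_ne (lgen_le hs) hne
    have hSne : ({I : Submodule R R | lgen s ≤ I ∧ I < lgen x}).Nonempty := ⟨lgen s, le_rfl, hlt⟩
    obtain ⟨M, hMmem, hMmax⟩ := Set.Finite.exists_maximalFor id _ (Set.toFinite _) hSne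
    refine hmax M ⟨hMmem.2, fun I' hI' hI'lt => ?_⟩ (hMmem.1 (x_mem_lgen s))
    have : M = I' := le_antisymm hI'.le (hMmax ⟨le_trans hMmem.1 hI'.le, hI'lt⟩ hI'.le)
    exact absurd (this ▸ hI') (lt_irrefl _)

lemma prod_one_sub {α : Type*} (P : Finset α) (c : α → ℂ) :
    ∏ M ∈ P, (1 - c M) = ∑ t ∈ P.powerset, (-1 : ℂ) ^ t.card * ∏ M ∈ t, c M := by
  classical
  have h : ∀ M ∈ P, (1 : ℂ) - c M = (fun M => -c M) M + (fun _ => (1:ℂ)) M := by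
    intro M _; simp; ring
  rw [Finset.prod_congr rfl h, Finset.prod_add]
  refine Finset.sum_congr rfl fun t _ => ?_
  rw [Finset.prod_const_one, mul_one]
  calc ∏ M ∈ t, -c M = ∏ M ∈ t, (-1 : ℂ) * c M := by
        refine Finset.prod_congr rfl fun M _ => by ring
    _ = (∏ _M ∈ t, (-1 : ℂ)) * ∏ M ∈ t, c M := Finset.prod_mul_distrib
    _ = (-1 : ℂ) ^ t.card * ∏ M ∈ t, c M := by rw [Finset.prod_const]

lemma master (x : R) (f : R → ℂ) :
    ∑ᶠ s ∈ classL x, f s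
      = ∑ t ∈ (Pfin x).powerset, (-1 : ℂ) ^ t.card * ∑ s ∈ sfin (It x t : Set R), f s := by
  classical
  have hfin : (classL x).Finite := Set.toFinite _
  rw [← Set.Finite.coe_toFinset hfin, finsum_mem_coe_finset]
  have hclass : hfin.toFinset = (sfin ((lgen x : Submodule R R) : Set R)).filter
      (fun s => ∀ M ∈ Pfin x, s ∉ M) := by
    ext s
    simp only [Set.Finite.mem_toFinset, Finset.mem_filter, mem_sfin]
    rw [classL_eq]
    simp only [Set.mem_setOf_eq, SetLike.mem_coe]
    constructor
    · rintro ⟨h1, h2⟩; exact ⟨h1, fun M hM => h2 M (mem_Pfin.1 hM)⟩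
    · rintro ⟨h1, h2⟩; exact ⟨h1, fun M hM => h2 M (mem_Pfin.2 hM)⟩
  rw [hclass, Finset.sum_filter]
  have hpt : ∀ s ∈ sfin ((lgen x : Submodule R R) : Set R),
      (if ∀ M ∈ Pfin x, s ∉ M then f s else 0)
        = ∑ t ∈ (Pfin x).powerset,
            (-1 : ℂ) ^ t.card * ((if s ∈ It x t then (1:ℂ) else 0) * f s) := by
    intro s hs
    have hsJ : s ∈ lgen x := by rwa [mem_sfin] at hs
    have key : (if ∀ M ∈ Pfin x, s ∉ M then (1:ℂ) else 0)
        = ∑ t ∈ (Pfin x).powerset, (-1 : ℂ) ^ t.card * (if s ∈ It x t then (1:ℂ) else 0) := by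
      have lhs_eq : (if ∀ M ∈ Pfin x, s ∉ M then (1:ℂ) else 0)
          = ∏ M ∈ Pfin x, (1 - if s ∈ M then (1:ℂ) else 0) := by
        split_ifs with hc
        · rw [eq_comm]
          apply Finset.prod_eq_one
          intro M hM
          rw [if_neg (hc M hM)]; ring
        · push_neg at hc
          obtain ⟨M, hM, hsM⟩ := hc
          rw [eq_comm]
          apply Finset.prod_eq_zero hM
          rw [if_pos hsM]; ring
      rw [lhs_eq, prod_one_sub]
      refine Finset.sum_congr rfl fun t ht => ?_
      congr 1
      have : (∏ M ∈ t, if s ∈ M then (1:ℂ) else 0) = if ∀ M ∈ t, s ∈ M then (1:ℂ) else 0 := by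
        split_ifs with hc
        · exact Finset.prod_eq_one fun M hM => if_pos (hc M hM)
        · push_neg at hc
          obtain ⟨M, hM, hsM⟩ := hc
          exact Finset.prod_eq_zero hM (if_neg hsM)
      rw [this]
      have hiff : (∀ M ∈ t, s ∈ M) ↔ s ∈ It x t := by
        simp only [It, Submodule.mem_inf, Submodule.mem_finsetInf, id_eq]
        exact ⟨fun h => ⟨hsJ, h⟩, fun h => h.2⟩
      simp only [hiff]
    calc (if ∀ M ∈ Pfin x, s ∉ M then f s else 0)
        = (if ∀ M ∈ Pfin x, s ∉ M then (1:ℂ) else 0) * f s := by split_ifs <;> ring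
      _ = (∑ t ∈ (Pfin x).powerset, (-1 : ℂ) ^ t.card * (if s ∈ It x t then (1:ℂ) else 0)) * f s := by
          rw [key]
      _ = _ := by rw [Finset.sum_mul]; refine Finset.sum_congr rfl fun t _ => by ring
  rw [Finset.sum_congr rfl hpt, Finset.sum_comm]
  refine Finset.sum_congr rfl fun t ht => ?_
  rw [← Finset.mul_sum]
  congr 1
  have hsimp : ∀ s ∈ sfin ((lgen x : Submodule R R) : Set R),
      (if s ∈ It x t then (1:ℂ) else 0) * f s = if s ∈ It x t then f s else 0 :=
    fun s _ => by split_ifs <;> ring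
  rw [Finset.sum_congr rfl hsimp, ← Finset.sum_filter]
  apply Finset.sum_congr _ (fun _ _ => rfl)
  ext s
  simp only [Finset.mem_filter, mem_sfin, SetLike.mem_coe]
  exact ⟨fun h => h.2, fun h => ⟨It_le_J t h, h⟩⟩

end Work3

section Work4
variable [CommRing R] [Fintype R]

lemma coprime_aux {x : R} {t : Finset (Submodule R R)} (ht : ∀ M' ∈ t, M' ∈ maxROf (lgen x))
    {M : Submodule R R} (hM : M ∈ maxROf (lgen x)) (hMt : M ∉ t) :
    ∃ u v : R, u ∈ ∏ M' ∈ t, M'.colon (lgen x) ∧ v ∈ M.colon (lgen x) ∧ u + v = 1 := by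
  have hcop : IsCoprime (∏ M' ∈ t, M'.colon (lgen x)) (M.colon (lgen x)) := by
    apply IsCoprime.prod_left
    intro M' hM'
    exact Ideal.isCoprime_iff_sup_eq.2 <| Ideal.IsMaximal.coprime_of_ne
      (cover_colon (ht M' hM')).1 (cover_colon hM).1
      (fun he => hMt (by
        have : M' = M := by
          rw [← (cover_colon (ht M' hM')).2, ← (cover_colon hM).2, he]
        rwa [this] at hM'))
  obtain ⟨u, hu, v, hv, huv⟩ := Ideal.isCoprime_iff_exists.1 hcop
  exact ⟨u, v, hu, hv, huv⟩

lemma It_anti {x : R} {s t : Finset (Submodule R R)} (h : s ⊆ t) : It x t ≤ It x s :=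
  inf_le_inf le_rfl (Finset.inf_mono h)

lemma crux {x : R} {K : Submodule R R} (hKJ : K ≤ lgen x) {t : Finset (Submodule R R)}
    (ht : ∀ M' ∈ t, M' ∈ maxROf (lgen x)) {M : Submodule R R} (hMt : M ∈ t)
    (hIt : It x t ≤ K) (hKM : ¬ K ≤ M) : It x (t.erase M) ≤ K := by
  classical
  set J := lgen x with hJ
  have hM : M ∈ maxROf J := ht M hMt
  have ht' : ∀ M' ∈ t.erase M, M' ∈ maxROf J := fun M' h => ht M' (Finset.mem_of_mem_erase h)
  obtain ⟨u, v, hu, hv, huv⟩ := coprime_aux ht' hM (Finset.notMem_erase M t)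
  -- K ⊔ M = J
  have hsupKM : K ⊔ M = J := by
    have hlt : M < K ⊔ M := lt_of_le_of_ne le_sup_right
      (fun he => hKM (he ▸ (le_sup_left : K ≤ K ⊔ M)))
    have hle : K ⊔ M ≤ J := sup_le hKJ hM.1.le
    refine le_antisymm hle ?_
    by_contra h
    exact hM.2 _ hlt (lt_of_le_of_ne hle (fun he => h (he ▸ le_rfl)))
  have hxKM : x ∈ K ⊔ M := hsupKM ▸ x_mem_lgen x
  obtain ⟨k, hk, m, hm, hab⟩ := Submodule.mem_sup.1 hxKM
  have hItt : It x t = It x (t.erase M) ⊓ M := by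
    conv_lhs => rw [← Finset.insert_erase hMt]
    exact It_insert
  intro a ha
  have haJ : a ∈ J := It_le_J _ ha
  obtain ⟨w, haw⟩ := mem_lgen.1 haJ
  have hva : v * a ∈ K := by
    apply hIt
    rw [hItt]
    refine Submodule.mem_inf.2 ⟨Submodule.smul_mem _ v ha, ?_⟩
    simpa using (Submodule.mem_colon.1 hv) a haJ
  have huwk : u * (w * k) ∈ K := K.smul_mem u (K.smul_mem w hk)
  have huwm : u * (w * m) ∈ K := by
    apply hIt
    rw [hItt]
    have hmJ : m ∈ J := hM.1.le hm
    refine Submodule.mem_inf.2 ⟨Submodule.mem_inf.2 ⟨Submodule.smul_mem _ _ (Submodule.smul_mem _ _ hmJ), ?_⟩, ?_⟩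
    · rw [Submodule.mem_finsetInf]
      intro M' hM'
      have huM' : u ∈ M'.colon J := (Ideal.prod_le_inf.trans (Finset.inf_le hM')) hu
      have : u * m ∈ M' := by simpa using (Submodule.mem_colon.1 huM') m hmJ
      have h2 : u * (w * m) = w * (u * m) := by ring
      rw [h2]
      exact M'.smul_mem w this
    · have h2 : u * (w * m) = (u * w) * m := by ring
      rw [h2]
      exact M.smul_mem (u * w) hm
  have hdecomp : a = v * a + u * (w * k) + u * (w * m) := by
    linear_combination -(w * x) * huv - u * w * hab + (1 - v) * haw
  rw [hdecomp]
  exact K.add_mem (K.add_mem hva huwk) huwm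

/-- `E₀` -/
noncomputable def E0 (x : R) (K : Submodule R R) : Finset (Submodule R R) :=
  (Pfin x).filter (fun M => K ≤ M)

lemma K_le_ItE0 {x : R} {K : Submodule R R} (hKJ : K ≤ lgen x) : K ≤ It x (E0 x K) :=
  le_inf hKJ (Finset.le_inf fun M hM => (Finset.mem_filter.1 hM).2)

lemma descend {x : R} {K : Submodule R R} (hKJ : K ≤ lgen x) (t : Finset (Submodule R R))
    (ht : ∀ M' ∈ t, M' ∈ maxROf (lgen x)) (hIt : It x t ≤ K) :
    K = It x (E0 x K) := by
  classical
  refine le_antisymm (K_le_ItE0 hKJ) ?_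
  induction t using Finset.strongInduction with
  | _ t ih =>
    by_cases hall : ∀ M ∈ t, K ≤ M
    · have hsub : t ⊆ E0 x K := fun M hM =>
        Finset.mem_filter.2 ⟨mem_Pfin.2 (ht M hM), hall M hM⟩
      exact le_trans (It_anti hsub) hIt
    · push_neg at hall
      obtain ⟨M, hMt, hKM⟩ := hall
      exact ih (t.erase M) (Finset.erase_ssubset hMt)
        (fun M' h => ht M' (Finset.mem_of_mem_erase h)) (crux hKJ ht hMt hIt hKM)

lemma It_le_K_iff {x : R} {K : Submodule R R} (hK0 : K = It x (E0 x K))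
    {t : Finset (Submodule R R)} (htP : t ⊆ Pfin x) :
    It x t ≤ K ↔ E0 x K ⊆ t := by
  constructor
  · intro h M hM
    have hKM : K ≤ M := (Finset.mem_filter.1 hM).2
    by_contra hMt
    have hcomax : It x t ⊔ M = lgen x :=
      comax (fun M' h' => mem_Pfin.1 (htP h')) (mem_Pfin.1 (Finset.mem_filter.1 hM).1) hMt
    have hMP : M ∈ maxROf (lgen x) := mem_Pfin.1 (Finset.mem_filter.1 hM).1
    have : lgen x ≤ M := hcomax ▸ sup_le (le_trans h hKM) le_rfl
    exact absurd (lt_of_lt_of_le hMP.1 this) (lt_irrefl _)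
  · intro h
    rw [hK0]
    exact It_anti h

lemma It_eq_K_iff {x : R} {K : Submodule R R} (hK0 : K = It x (E0 x K))
    {t : Finset (Submodule R R)} (htP : t ⊆ Pfin x) :
    It x t = K ↔ t = E0 x K := by
  constructor
  · intro h
    apply Finset.Subset.antisymm
    · intro M hM
      refine Finset.mem_filter.2 ⟨htP hM, ?_⟩
      rw [← h]
      exact It_le_mem hM
    · exact (It_le_K_iff hK0 htP).1 h.le
  · rintro rfl
    exact hK0.symm

end Work4

lemma count_aux {α : Type*} (c : α) (q : Prop) :
    Nat.card {E : α // E = c ∧ q} = if q then 1 else 0 := by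
  split_ifs with hq
  · haveI : Unique {E : α // E = c ∧ q} :=
      ⟨⟨⟨c, rfl, hq⟩⟩, fun a => Subtype.ext a.2.1⟩
    exact Nat.card_unique
  · haveI : IsEmpty {E : α // E = c ∧ q} := ⟨by rintro ⟨E, _, h⟩; exact hq h⟩
    exact Nat.card_of_isEmpty

lemma card_coe_finset {α : Type*} (t : Finset α) : Nat.card ↥(↑t : Set α) = t.card := by
  rw [Nat.card_coe_set_eq, Set.ncard_coe_finset]

section Work5
variable [CommRing R] [Fintype R]

lemma inf_le_J {x : R} {t : Finset (Submodule R R)} (htP : t ⊆ Pfin x) (hne : t.Nonempty) :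
    t.inf id ≤ lgen x := by
  obtain ⟨M, hM⟩ := hne
  exact le_trans (Finset.inf_le hM) (mem_Pfin.1 (htP hM)).1.le

lemma It_eq_inf {x : R} {t : Finset (Submodule R R)} (htP : t ⊆ Pfin x) (hne : t.Nonempty) :
    It x t = t.inf id := inf_eq_right.2 (inf_le_J htP hne)

lemma E0_subset {x : R} {K : Submodule R R} : E0 x K ⊆ Pfin x := Finset.filter_subset _ _

lemma interIn_E0 {x : R} {K : Submodule R R} (hK0 : K = It x (E0 x K))
    (hne : (E0 x K).Nonempty) : interIn (lgen x) ↑(E0 x K) = K := by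
  rw [interIn, if_neg (by simpa using hne.ne_empty)]
  rw [← Finset.inf_id_eq_sInf, ← It_eq_inf E0_subset hne]
  exact hK0.symm

lemma setE_to_finset {x : R} {K : Submodule R R} (hKJne : K ≠ lgen x)
    {E : Set (Submodule R R)} (hE : E ⊆ maxROf (lgen x)) (hinter : interIn (lgen x) E = K) :
    ∃ t : Finset (Submodule R R), ↑t = E ∧ t ⊆ Pfin x ∧ It x t = K ∧ t.Nonempty := by
  have hEne : E ≠ ∅ := by
    rintro rfl
    rw [interIn, if_pos rfl] at hinter
    exact hKJne hinter.symm
  refine ⟨(Set.toFinite E).toFinset, Set.Finite.coe_toFinset _, ?_, ?_, ?_⟩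
  · intro M hM
    exact mem_Pfin.2 (hE (by rwa [Set.Finite.mem_toFinset] at hM))
  · have hne : ((Set.toFinite E).toFinset).Nonempty := by
      rw [← Finset.coe_nonempty, Set.Finite.coe_toFinset]
      exact Set.nonempty_iff_ne_empty.2 hEne
    rw [It_eq_inf (fun M hM => mem_Pfin.2 (hE (by rwa [Set.Finite.mem_toFinset] at hM))) hne]
    rw [Finset.inf_id_eq_sInf, Set.Finite.coe_toFinset]
    rw [interIn, if_neg hEne] at hinter
    exact hinter
  · rw [← Finset.coe_nonempty, Set.Finite.coe_toFinset]
    exact Set.nonempty_iff_ne_empty.2 hEne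

end Work5

section Work6
variable [CommRing R] [Fintype R]

lemma card_pos_c (I : Submodule R R) : (Nat.card ↥I : ℂ) ≠ 0 := by
  haveI : Nonempty ↥I := ⟨⟨0, I.zero_mem⟩⟩
  have : 0 < Nat.card ↥I := Nat.card_pos
  exact_mod_cast this.ne'

lemma card_It_c {x : R} {t : Finset (Submodule R R)} (htP : t ⊆ Pfin x) :
    (Nat.card ↥(It x t) : ℂ)
      = (Nat.card ↥(lgen x) : ℂ) * ∏ M ∈ t, ((Nat.card ↥M : ℂ) / (Nat.card ↥(lgen x) : ℂ)) := by
  have hnat := card_It (x := x) (t := t) (fun M hM => mem_Pfin.1 (htP hM))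
  have hc : (Nat.card ↥(It x t) : ℂ) * ((Nat.card ↥(lgen x) : ℂ)) ^ t.card
      = (Nat.card ↥(lgen x) : ℂ) * ∏ M ∈ t, (Nat.card ↥M : ℂ) := by
    have := congrArg (fun n : ℕ => (n : ℂ)) hnat
    push_cast at this
    simpa [Finset.prod_const] using this
  rw [Finset.prod_div_distrib, Finset.prod_const, mul_div_assoc']
  rw [eq_div_iff (pow_ne_zero _ (card_pos_c (lgen x)))]
  linear_combination hc

lemma card_lt_cover {x : R} {M : Submodule R R} (hM : M ∈ maxROf (lgen x)) :
    Nat.card ↥M < Nat.card ↥(lgen x) := by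
  have h1 : Nat.card ↥M = (M : Set R).ncard := Nat.card_coe_set_eq (M : Set R)
  have h2 : Nat.card ↥(lgen x) = ((lgen x : Submodule R R) : Set R).ncard :=
    Nat.card_coe_set_eq _
  rw [h1, h2]
  apply Set.ncard_lt_ncard _ (Set.toFinite _)
  rw [ssubset_iff_subset_ne]
  exact ⟨fun a ha => hM.1.le ha, fun he => hM.1.ne (SetLike.coe_injective he)⟩

lemma sum_superset_reindex {x : R} {K : Submodule R R} (F : Finset (Submodule R R) → ℂ) :
    ∑ t ∈ (Pfin x).powerset.filter (fun t => E0 x K ⊆ t), F t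
      = ∑ u ∈ ((Pfin x) \ (E0 x K)).powerset, F (E0 x K ∪ u) := by
  classical
  apply Finset.sum_nbij' (fun t => t \ E0 x K) (fun u => E0 x K ∪ u)
  · intro t ht
    rw [Finset.mem_filter, Finset.mem_powerset] at ht
    rw [Finset.mem_powerset]
    exact Finset.sdiff_subset_sdiff ht.1 le_rfl
  · intro u hu
    rw [Finset.mem_powerset] at hu
    rw [Finset.mem_filter, Finset.mem_powerset]
    constructor
    · exact Finset.union_subset E0_subset (hu.trans (Finset.sdiff_subset))
    · exact Finset.subset_union_left
  · intro t ht
    rw [Finset.mem_filter] at ht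
    exact Finset.union_sdiff_of_subset ht.2
  · intro u hu
    rw [Finset.mem_powerset] at hu
    rw [Finset.union_sdiff_cancel_left]
    exact Finset.disjoint_left.2 fun M hME hMu => (Finset.mem_sdiff.1 (hu hMu)).2 hME
  · intro t ht
    rw [Finset.mem_filter] at ht
    rw [Finset.union_sdiff_of_subset ht.2]

end Work6


theorem stmt2 [CommRing R] [Fintype R] (χ : AddChar R ℂ) (x : R) (K : Submodule R R)
    (hK : (K : Set R) ⊆ (lgen x : Set R) ∩ {y | χ y = 1})
    (hKmax : ∀ L : Submodule R R,
      (L : Set R) ⊆ (lgen x : Set R) ∩ {y | χ y = 1} → L ≤ K) :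
    phiR K (lgen x) * CchiL χ x = (muR K (lgen x) : ℂ) * (Nat.card (classL x) : ℂ) ∧
    CchiL χ x = (muR K (lgen x) : ℂ) * (Nat.card (classL x) : ℂ) / phiR K (lgen x) := by
  classical
  have hKJ : K ≤ lgen x := fun s hs => (hK hs).1
  have hker : ∀ I : Submodule R R, I ≤ lgen x → ((∀ s ∈ I, χ s = 1) ↔ I ≤ K) := by
    intro I hle
    constructor
    · intro h
      exact hKmax I (fun s hs => ⟨hle hs, h s hs⟩)
    · intro h s hs
      exact (hK (h hs)).2
  have hfin : (classL x).Finite := Set.toFinite _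
  have hcount : ∑ᶠ s ∈ classL x, (1 : ℂ) = (Nat.card (classL x) : ℂ) := by
    have h1 : ∑ᶠ s ∈ classL x, (1:ℂ) = ∑ s ∈ hfin.toFinset, (1:ℂ) := by
      conv_lhs => rw [← Set.Finite.coe_toFinset hfin]
      exact finsum_mem_coe_finset _ _
    rw [h1, Finset.sum_const, nsmul_eq_mul, mul_one, Nat.card_coe_set_eq,
      Set.ncard_eq_toFinset_card _ hfin]
  by_cases hKJeq : K = lgen x
  · have hmu : muR K (lgen x) = 1 := by rw [muR, if_pos hKJeq]
    have hphi : phiR K (lgen x) = 1 := by rw [phiR, if_pos hKJeq]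
    have hC : CchiL χ x = (Nat.card (classL x) : ℂ) := by
      rw [CchiL, ← hcount]
      apply finsum_mem_congr rfl
      intro s hs
      have hsJ : s ∈ lgen x := by
        have : s ∈ lgen s := x_mem_lgen s
        rwa [hs] at this
      exact (hK (by rw [hKJeq]; exact hsJ)).2
    rw [hmu, hphi, hC]
    norm_num
  · have hKlt : K < lgen x := lt_of_le_of_ne hKJ hKJeq
    have hCmaster : CchiL χ x = ∑ t ∈ (Pfin x).powerset,
        (-1:ℂ)^t.card * (if It x t ≤ K then (Nat.card ↥(It x t) : ℂ) else 0) := by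
      rw [CchiL, master x (fun s => χ s)]
      refine Finset.sum_congr rfl fun t ht => ?_
      congr 1
      rw [char_sum_submodule]
      congr 1
      rw [eq_iff_iff]
      exact hker _ (It_le_J t)
    have hcardm : (Nat.card (classL x) : ℂ) = ∑ t ∈ (Pfin x).powerset,
        (-1:ℂ)^t.card * (Nat.card ↥(It x t) : ℂ) := by
      rw [← hcount, master x (fun _ => (1:ℂ))]
      refine Finset.sum_congr rfl fun t ht => ?_
      congr 1
      rw [Finset.sum_const, nsmul_eq_mul, mul_one, card_sfin]
      rfl
    by_cases hex : ∃ t : Finset (Submodule R R), t ⊆ Pfin x ∧ It x t ≤ K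
    · obtain ⟨t₀, ht₀P, ht₀K⟩ := hex
      have hK0 : K = It x (E0 x K) :=
        descend hKJ t₀ (fun M hM => mem_Pfin.1 (ht₀P hM)) ht₀K
      have hE0ne : (E0 x K).Nonempty := by
        rw [Finset.nonempty_iff_ne_empty]
        rintro he
        rw [he, It_empty] at hK0
        exact hKJeq hK0
      have hbranch : K < lgen x ∧ ∃ E : Set (Submodule R R),
          E ⊆ maxROf (lgen x) ∧ E.Nonempty ∧ interIn (lgen x) E = K := by
        refine ⟨hKlt, ↑(E0 x K), ?_, ?_, interIn_E0 hK0 hE0ne⟩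
        · intro M hM
          exact mem_Pfin.1 (E0_subset (Finset.mem_coe.1 hM))
        · exact Finset.coe_nonempty.2 hE0ne
      set e0 := (E0 x K).card with he0
      have hPE : ∀ E : Set (Submodule R R),
          (E ⊆ maxROf (lgen x) ∧ interIn (lgen x) E = K) ↔ E = ↑(E0 x K) := by
        intro E
        constructor
        · rintro ⟨h1, h2⟩
          obtain ⟨t, hcoe, htP, hItK, -⟩ := setE_to_finset hKJeq h1 h2
          rw [← hcoe, (It_eq_K_iff hK0 htP).1 hItK]
        · rintro rfl
          exact ⟨fun M hM => mem_Pfin.1 (E0_subset (Finset.mem_coe.1 hM)),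
            interIn_E0 hK0 hE0ne⟩
      have hmueval : (muR K (lgen x) : ℂ) = (-1:ℂ)^e0 := by
        have hiffE : ∀ E : Set (Submodule R R),
            (E ⊆ maxROf (lgen x) ∧ interIn (lgen x) E = K ∧ Even (Nat.card E))
              ↔ (E = ↑(E0 x K) ∧ Even e0) := by
          intro E
          constructor
          · rintro ⟨h1, h2, h3⟩
            have hE := (hPE E).1 ⟨h1, h2⟩
            refine ⟨hE, ?_⟩
            rwa [hE, card_coe_finset] at h3
          · rintro ⟨rfl, h⟩
            obtain ⟨ha, hb⟩ := (hPE _).2 rfl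
            exact ⟨ha, hb, by rwa [card_coe_finset]⟩
        have hiffO : ∀ E : Set (Submodule R R),
            (E ⊆ maxROf (lgen x) ∧ interIn (lgen x) E = K ∧ Odd (Nat.card E))
              ↔ (E = ↑(E0 x K) ∧ Odd e0) := by
          intro E
          constructor
          · rintro ⟨h1, h2, h3⟩
            have hE := (hPE E).1 ⟨h1, h2⟩
            refine ⟨hE, ?_⟩
            rwa [hE, card_coe_finset] at h3
          · rintro ⟨rfl, h⟩
            obtain ⟨ha, hb⟩ := (hPE _).2 rfl
            exact ⟨ha, hb, by rwa [card_coe_finset]⟩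
        have heven : Nat.card {E : Set (Submodule R R) //
            E ⊆ maxROf (lgen x) ∧ interIn (lgen x) E = K ∧ Even (Nat.card E)}
            = if Even e0 then 1 else 0 := by
          rw [Nat.card_congr (Equiv.subtypeEquivRight hiffE),
            count_aux ((E0 x K : Set (Submodule R R))) (Even e0)]
          split_ifs <;> rfl
        have hodd : Nat.card {E : Set (Submodule R R) //
            E ⊆ maxROf (lgen x) ∧ interIn (lgen x) E = K ∧ Odd (Nat.card E)}
            = if Odd e0 then 1 else 0 := by
          rw [Nat.card_congr (Equiv.subtypeEquivRight hiffO),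
            count_aux ((E0 x K : Set (Submodule R R))) (Odd e0)]
          split_ifs <;> rfl
        rw [muR, if_neg hKJeq, if_pos hbranch, heven, hodd]
        rcases Nat.even_or_odd e0 with hp | hp
        · rw [if_pos hp, if_neg (Nat.not_odd_iff_even.2 hp), hp.neg_one_pow]
          norm_num
        · rw [if_neg (Nat.not_even_iff_odd.2 hp), if_pos hp, hp.neg_one_pow]
          norm_num
      have hAbove : maxROfAbove (lgen x) K = ↑(E0 x K) := by
        ext M
        constructor
        · rintro ⟨h1, h2⟩
          exact Finset.mem_coe.2 (Finset.mem_filter.2 ⟨mem_Pfin.2 h1, h2⟩)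
        · intro h
          have h' := Finset.mem_filter.1 (Finset.mem_coe.1 h)
          exact ⟨mem_Pfin.1 h'.1, h'.2⟩
      have hphieval : phiR K (lgen x) = ∏ M ∈ E0 x K,
          ((Nat.card ↥(lgen x) : ℂ) / (Nat.card ↥M : ℂ) - 1) := by
        rw [phiR, if_neg hKJeq, if_pos hbranch, hAbove, finprod_mem_coe_finset]
      set cJ : ℂ := (Nat.card ↥(lgen x) : ℂ) with hcJdef
      set r : Submodule R R → ℂ := fun M => (Nat.card ↥M : ℂ) / cJ with hrdef
      have hcJ0 : cJ ≠ 0 := card_pos_c _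
      have hC : CchiL χ x = (-1:ℂ)^e0 * (cJ * ∏ M ∈ E0 x K, r M)
          * ∏ M ∈ (Pfin x) \ (E0 x K), (1 - r M) := by
        rw [hCmaster]
        have hterm : ∀ t ∈ (Pfin x).powerset,
            (-1:ℂ)^t.card * (if It x t ≤ K then (Nat.card ↥(It x t) : ℂ) else 0)
              = if E0 x K ⊆ t then (-1:ℂ)^t.card * (cJ * ∏ M ∈ t, r M) else 0 := by
          intro t ht
          rw [Finset.mem_powerset] at ht
          by_cases hc : It x t ≤ K
          · rw [if_pos hc, if_pos ((It_le_K_iff hK0 ht).1 hc), card_It_c ht]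
          · rw [if_neg hc, if_neg (fun hsub => hc ((It_le_K_iff hK0 ht).2 hsub)), mul_zero]
        rw [Finset.sum_congr rfl hterm, ← Finset.sum_filter, sum_superset_reindex]
        have hdisj : ∀ u ∈ ((Pfin x) \ (E0 x K)).powerset, Disjoint (E0 x K) u := by
          intro u hu
          rw [Finset.mem_powerset] at hu
          exact Finset.disjoint_left.2 fun M hME hMu => (Finset.mem_sdiff.1 (hu hMu)).2 hME
        have hterm2 : ∀ u ∈ ((Pfin x) \ (E0 x K)).powerset,
            (-1:ℂ)^(E0 x K ∪ u).card * (cJ * ∏ M ∈ E0 x K ∪ u, r M)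
              = ((-1:ℂ)^e0 * (cJ * ∏ M ∈ E0 x K, r M)) * ((-1:ℂ)^u.card * ∏ M ∈ u, r M) := by
          intro u hu
          rw [Finset.card_union_of_disjoint (hdisj u hu), Finset.prod_union (hdisj u hu), pow_add]
          ring
        rw [Finset.sum_congr rfl hterm2, ← Finset.mul_sum, ← prod_one_sub]
      have hcardv : (Nat.card (classL x) : ℂ) = cJ * ∏ M ∈ Pfin x, (1 - r M) := by
        rw [hcardm]
        have hterm : ∀ t ∈ (Pfin x).powerset,
            (-1:ℂ)^t.card * (Nat.card ↥(It x t) : ℂ)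
              = cJ * ((-1:ℂ)^t.card * ∏ M ∈ t, r M) := by
          intro t ht
          rw [card_It_c (Finset.mem_powerset.1 ht)]
          ring
        rw [Finset.sum_congr rfl hterm, ← Finset.mul_sum, ← prod_one_sub]
      have hfactor : ∀ M ∈ E0 x K, ((cJ / (Nat.card ↥M : ℂ)) - 1) * r M = 1 - r M := by
        intro M hM
        have h0 : (Nat.card ↥M : ℂ) ≠ 0 := card_pos_c M
        rw [hrdef]
        field_simp
      have hfirst : phiR K (lgen x) * CchiL χ x
          = (muR K (lgen x) : ℂ) * (Nat.card (classL x) : ℂ) := by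
        rw [hphieval, hC, hmueval, hcardv]
        calc (∏ M ∈ E0 x K, (cJ / (Nat.card ↥M : ℂ) - 1)) *
              ((-1:ℂ)^e0 * (cJ * ∏ M ∈ E0 x K, r M) * ∏ M ∈ (Pfin x) \ (E0 x K), (1 - r M))
            = (-1:ℂ)^e0 * cJ * ((∏ M ∈ E0 x K, ((cJ / (Nat.card ↥M : ℂ) - 1) * r M))
                * ∏ M ∈ (Pfin x) \ (E0 x K), (1 - r M)) := by
              rw [Finset.prod_mul_distrib]; ring
          _ = (-1:ℂ)^e0 * cJ * ((∏ M ∈ E0 x K, (1 - r M))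
                * ∏ M ∈ (Pfin x) \ (E0 x K), (1 - r M)) := by
              rw [Finset.prod_congr rfl hfactor]
          _ = (-1:ℂ)^e0 * (cJ * ∏ M ∈ Pfin x, (1 - r M)) := by
              rw [mul_comm (∏ M ∈ E0 x K, (1 - r M)) _, Finset.prod_sdiff E0_subset]
              ring
      have hphine : phiR K (lgen x) ≠ 0 := by
        rw [hphieval]
        intro h0
        obtain ⟨M, hM, hM0⟩ := Finset.prod_eq_zero_iff.1 h0
        have h1 : cJ / (Nat.card ↥M : ℂ) = 1 := by
          have := sub_eq_zero.1 hM0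
          exact this
        have h2 : cJ = (Nat.card ↥M : ℂ) := (div_eq_one_iff_eq (card_pos_c M)).1 h1
        have h3 : Nat.card ↥(lgen x) = Nat.card ↥M := by
          rw [hcJdef] at h2
          exact_mod_cast h2
        have h4 : Nat.card ↥M < Nat.card ↥(lgen x) :=
          card_lt_cover (mem_Pfin.1 (E0_subset hM))
        omega
      refine ⟨hfirst, ?_⟩
      rw [eq_div_iff hphine]
      linear_combination hfirst
    · have hnobranch : ¬(K < lgen x ∧ ∃ E : Set (Submodule R R),
          E ⊆ maxROf (lgen x) ∧ E.Nonempty ∧ interIn (lgen x) E = K) := by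
        rintro ⟨-, E, hEsub, -, hEint⟩
        obtain ⟨t, -, htP, hItK, -⟩ := setE_to_finset hKJeq hEsub hEint
        exact hex ⟨t, htP, hItK.le⟩
      have hmu : muR K (lgen x) = 0 := by rw [muR, if_neg hKJeq, if_neg hnobranch]
      have hphi : phiR K (lgen x) = 1 := by rw [phiR, if_neg hKJeq, if_neg hnobranch]
      have hC : CchiL χ x = 0 := by
        rw [hCmaster]
        apply Finset.sum_eq_zero
        intro t ht
        rw [if_neg, mul_zero]
        intro hc
        exact hex ⟨t, Finset.mem_powerset.1 ht, hc⟩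
      rw [hmu, hphi, hC]
      norm_num
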